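/- If T : C(X) → C(X) is fully order preserving (dim X ≥ 2), then the map γ : X* × ℝ → ℝ giving the additive constant of T(h_{u,α}) is affine, i.e., γ(s(u₁,α₁)+(1−s)(u₂,α₂)) = sγ(u₁,α₁)+(1−s)γ(u₂,α₂) for all u₁,u₂ ∈ X*, α₁,α₂ ∈ ℝ, s ∈ [0,1]. -/

import Mathlib

open Set

noncomputable section

variable {X : Type*}

/-- The class of proper, lower semicontinuous, convex functions `X → ℝ ∪ {+∞}`,
encoded as `EReal`-valued functions never taking the value `⊥`. -/
def IsClFun (X : Type*) [NormedAddCommGroup X] [NormedSpace ℝ X] (f : X → EReal) : Prop :=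
  (∀ x, f x ≠ ⊥) ∧ (∃ x, f x ≠ ⊤) ∧ LowerSemicontinuous f ∧
  ∀ x y : X, ∀ a b : ℝ, 0 ≤ a → 0 ≤ b → a + b = 1 →
    f (a • x + b • y) ≤ (a : EReal) * f x + (b : EReal) * f y

/-- `C(X)`, as a subtype. -/
abbrev Cl (X : Type*) [NormedAddCommGroup X] [NormedSpace ℝ X] :=
  {f : X → EReal // IsClFun X f}

/-- The continuous affine function `h_{u,α}(x) = ⟨u,x⟩ + α`. -/
def aff [NormedAddCommGroup X] [NormedSpace ℝ X] (u : X →L[ℝ] ℝ) (α : ℝ) : X → EReal :=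
  fun x => ((u x + α : ℝ) : EReal)

theorem affMem [NormedAddCommGroup X] [NormedSpace ℝ X] (u : X →L[ℝ] ℝ) (α : ℝ) :
    IsClFun X (aff u α) := by
  refine ⟨fun x => EReal.coe_ne_bot _, ⟨0, EReal.coe_ne_top _⟩, ?_, ?_⟩
  · exact (continuous_coe_real_ereal.comp (by continuity)).lowerSemicontinuous
  · intro x y a b ha hb hab
    simp only [aff, map_add, map_smul, smul_eq_mul]
    rw [← EReal.coe_mul, ← EReal.coe_mul, ← EReal.coe_add, EReal.coe_le_coe_iff]
    have h : a * α + b * α = α := by rw [← add_mul, hab, one_mul]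
    nlinarith

/-- `h_{u,α}` as an element of `C(X)`. -/
def affCl [NormedAddCommGroup X] [NormedSpace ℝ X] (u : X →L[ℝ] ℝ) (α : ℝ) : Cl X :=
  ⟨aff u α, affMem u α⟩

/-- An operator on `C(X)` is fully order preserving if it is onto and
`f ≤ g ↔ T f ≤ T g` (pointwise order). -/
def FullyOrderPreserving [NormedAddCommGroup X] [NormedSpace ℝ X]
    (T : Cl X → Cl X) : Prop :=
  Function.Surjective T ∧ ∀ f g : Cl X, f.1 ≤ g.1 ↔ (T f).1 ≤ (T g).1


lemma ereal_coe_le_of_forall_lt {a : EReal} {r : ℝ} (h : ∀ s : ℝ, s < r → (s : EReal) ≤ a) :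
    (r : EReal) ≤ a := by
  induction a using EReal.rec with
  | bot => exact absurd (le_bot_iff.mp (h (r - 1) (by linarith))) (EReal.coe_ne_bot _)
  | coe t =>
    rw [EReal.coe_le_coe_iff]
    by_contra ht
    push_neg at ht
    have := EReal.coe_le_coe_iff.mp (h ((t + r) / 2) (by linarith))
    linarith
  | top => exact le_top

lemma ereal_le_coe_of_forall_gt {a : EReal} {r : ℝ} (h : ∀ s : ℝ, r < s → a ≤ (s : EReal)) :
    a ≤ (r : EReal) := by
  induction a using EReal.rec with
  | bot => exact bot_le
  | coe t =>
    rw [EReal.coe_le_coe_iff]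
    by_contra ht
    push_neg at ht
    have := EReal.coe_le_coe_iff.mp (h ((r + t) / 2) (by linarith))
    linarith
  | top => exact absurd (top_le_iff.mp (h (r + 1) (by linarith))) (EReal.coe_ne_top _)

lemma ereal_eq_top_of_forall {a : EReal} (h : ∀ r : ℝ, (r : EReal) ≤ a) : a = ⊤ := by
  induction a using EReal.rec with
  | bot => exact absurd (le_bot_iff.mp (h 0)) (EReal.coe_ne_bot _)
  | coe t => exact absurd (EReal.coe_le_coe_iff.mp (h (t + 1))) (by linarith)
  | top => rfl

lemma ereal_eq_bot_of_forall {a : EReal} (h : ∀ r : ℝ, a ≤ (r : EReal)) : a = ⊥ := by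
  induction a using EReal.rec with
  | bot => rfl
  | coe t => exact absurd (EReal.coe_le_coe_iff.mp (h (t - 1))) (by linarith)
  | top => exact absurd (top_le_iff.mp (h 0)) (EReal.coe_ne_top _)

section Lemmas

variable [NormedAddCommGroup X] [NormedSpace ℝ X]

lemma aff_le_aff_iff {u v : X →L[ℝ] ℝ} {α β : ℝ} :
    aff u α ≤ aff v β ↔ u = v ∧ α ≤ β := by
  constructor
  · intro h
    have hr : ∀ x, u x + α ≤ v x + β := fun x => EReal.coe_le_coe_iff.mp (h x)
    have huv : u = v := by
      ext x
      by_contra hne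
      set d := u x - v x with hd
      have hdne : d ≠ 0 := sub_ne_zero.mpr hne
      have h2 := hr (((β - α + 1) / d) • x)
      simp only [map_smul, smul_eq_mul] at h2
      have : (β - α + 1) / d * u x - (β - α + 1) / d * v x = β - α + 1 := by
        field_simp
        ring
      linarith
    refine ⟨huv, ?_⟩
    have := hr 0
    simp only [map_zero] at this
    linarith
  · rintro ⟨rfl, h⟩ x
    exact EReal.coe_le_coe_iff.mpr (by linarith)

/-- pointwise max of two affine functions, as an element of `C(X)`. -/
def maxAff (u₁ : X →L[ℝ] ℝ) (α₁ : ℝ) (u₂ : X →L[ℝ] ℝ) (α₂ : ℝ) : Cl X :=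
  ⟨fun x => ((max (u₁ x + α₁) (u₂ x + α₂) : ℝ) : EReal), by
    refine ⟨fun x => EReal.coe_ne_bot _, ⟨0, EReal.coe_ne_top _⟩, ?_, ?_⟩
    · exact (continuous_coe_real_ereal.comp (by continuity)).lowerSemicontinuous
    · intro x y a b ha hb hab
      rw [← EReal.coe_mul, ← EReal.coe_mul, ← EReal.coe_add, EReal.coe_le_coe_iff]
      have e1 : u₁ (a • x + b • y) + α₁ = a * (u₁ x + α₁) + b * (u₁ y + α₁) := by
        have h : a * α₁ + b * α₁ = α₁ := by rw [← add_mul, hab, one_mul]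
        simp only [map_add, map_smul, smul_eq_mul]; linarith
      have e2 : u₂ (a • x + b • y) + α₂ = a * (u₂ x + α₂) + b * (u₂ y + α₂) := by
        have h : a * α₂ + b * α₂ = α₂ := by rw [← add_mul, hab, one_mul]
        simp only [map_add, map_smul, smul_eq_mul]; linarith
      apply max_le
      · rw [e1]
        have := le_max_left (u₁ x + α₁) (u₂ x + α₂)
        have := le_max_left (u₁ y + α₁) (u₂ y + α₂)
        nlinarith
      · rw [e2]
        have := le_max_right (u₁ x + α₁) (u₂ x + α₂)
        have := le_max_right (u₁ y + α₁) (u₂ y + α₂)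
        nlinarith⟩


section TLemmas

variable {T : Cl X → Cl X} {y : (X →L[ℝ] ℝ) → (X →L[ℝ] ℝ)} {γ : (X →L[ℝ] ℝ) → ℝ → ℝ}
variable (hT : FullyOrderPreserving T)
variable (hrep : ∀ (u : X →L[ℝ] ℝ) (α : ℝ), (T (affCl u α)).1 = aff (y u) (γ u α))

include hT hrep

lemma gamma_le_iff (u : X →L[ℝ] ℝ) (α β : ℝ) : γ u α ≤ γ u β ↔ α ≤ β := by
  have h1 : γ u α ≤ γ u β ↔ aff (y u) (γ u α) ≤ aff (y u) (γ u β) := by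
    constructor
    · intro h
      exact aff_le_aff_iff.mpr ⟨rfl, h⟩
    · intro h
      exact (aff_le_aff_iff.mp h).2
  rw [h1, ← hrep, ← hrep, ← hT.2]
  show (affCl u α).1 ≤ (affCl u β).1 ↔ _
  constructor
  · intro h; exact (aff_le_aff_iff.mp h).2
  · intro h; exact aff_le_aff_iff.mpr ⟨rfl, h⟩

lemma gamma_surj (u : X →L[ℝ] ℝ) : Function.Surjective (γ u) := by
  intro c
  obtain ⟨g, hg⟩ := hT.1 (affCl (y u) c)
  have haux : ∀ α, γ u α ≤ c → (affCl u α).1 ≤ g.1 := by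
    intro α h
    apply (hT.2 _ _).mpr
    rw [hg, hrep]
    intro x
    exact EReal.coe_le_coe_iff.mpr (by linarith)
  have haux2 : ∀ α, c ≤ γ u α → g.1 ≤ (affCl u α).1 := by
    intro α h
    apply (hT.2 _ _).mpr
    rw [hg, hrep]
    intro x
    exact EReal.coe_le_coe_iff.mpr (by linarith)
  set S := {α : ℝ | γ u α ≤ c} with hS
  have hne : S.Nonempty := by
    by_contra h
    have hlt : ∀ α, c < γ u α := by
      intro α
      by_contra h2
      push_neg at h2
      exact h ⟨α, h2⟩
    have h3 : ∀ r : ℝ, g.1 0 ≤ (r : EReal) := by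
      intro r
      have := haux2 (r - u 0) (hlt _).le 0
      simpa [affCl, aff] using this
    exact g.2.1 0 (ereal_eq_bot_of_forall h3)
  have hbdd : BddAbove S := by
    by_cases hub : ∃ α₀, c < γ u α₀
    · obtain ⟨α₀, hα₀⟩ := hub
      refine ⟨α₀, fun α hα => ?_⟩
      by_contra hc
      push_neg at hc
      have := (gamma_le_iff hT hrep u α₀ α).mpr hc.le
      exact absurd (lt_of_lt_of_le hα₀ (le_trans this hα)) (lt_irrefl c)
    · push_neg at hub
      exfalso
      obtain ⟨x₀, hx₀⟩ := g.2.2.1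
      have h3 : ∀ r : ℝ, (r : EReal) ≤ g.1 x₀ := by
        intro r
        have := haux (r - u x₀) (hub _) x₀
        simpa [affCl, aff] using this
      exact hx₀ (ereal_eq_top_of_forall h3)
  set A := sSup S with hA
  have hg1 : g.1 = aff u A := by
    funext x
    apply le_antisymm
    · apply ereal_le_coe_of_forall_gt
      intro r hr
      have hα : A < r - u x := by linarith
      have hnot : ¬ (r - u x) ∈ S := fun hmem => absurd (le_csSup hbdd hmem) (not_le.mpr hα)
      have hcle : c ≤ γ u (r - u x) := (not_le.mp hnot).le
      have := haux2 _ hcle x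
      simpa [affCl, aff] using this
    · apply ereal_coe_le_of_forall_lt
      intro r hr
      have hα : r - u x < A := by linarith
      obtain ⟨α', hα'S, hα'⟩ := exists_lt_of_lt_csSup hne hα
      have := haux α' hα'S x
      have h2 : (r : EReal) ≤ ((u x + α' : ℝ) : EReal) := EReal.coe_le_coe_iff.mpr (by linarith)
      exact le_trans h2 this
  have hTA : T (affCl u A) = affCl (y u) c := by
    rw [← hg]; congr 1; exact Subtype.ext hg1.symm
  have h2 : aff (y u) (γ u A) = aff (y u) c := by
    rw [← hrep u A, hTA]; rfl
  refine ⟨A, ?_⟩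
  have := congrFun h2 0
  simp only [aff, map_zero, EReal.coe_eq_coe_iff] at this
  linarith

lemma y_inj : Function.Injective y := by
  intro u₁ u₂ h
  obtain ⟨α₂', hα₂'⟩ := gamma_surj hT hrep u₂ (γ u₁ 0)
  have hTeq : T (affCl u₁ 0) = T (affCl u₂ α₂') := by
    have h1 : (T (affCl u₁ 0)).1 = (T (affCl u₂ α₂')).1 := by
      rw [hrep, hrep, h, hα₂']
    exact Subtype.ext h1
  have hinj : affCl u₁ 0 = affCl u₂ α₂' := by
    apply Subtype.ext
    apply le_antisymm
    · exact (hT.2 _ _).mpr (le_of_eq (congrArg Subtype.val hTeq))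
    · exact (hT.2 _ _).mpr (le_of_eq (congrArg Subtype.val hTeq.symm))
  have : aff u₁ 0 ≤ aff u₂ α₂' := le_of_eq (congrArg Subtype.val hinj)
  exact (aff_le_aff_iff.mp this).1

lemma T_max (u₁ : X →L[ℝ] ℝ) (α₁ : ℝ) (u₂ : X →L[ℝ] ℝ) (α₂ : ℝ) :
    (T (maxAff u₁ α₁ u₂ α₂)).1 = (maxAff (y u₁) (γ u₁ α₁) (y u₂) (γ u₂ α₂)).1 := by
  have key : ∀ (v₁ : X →L[ℝ] ℝ) (β₁ v₂ β₂), aff v₁ β₁ ≤ (maxAff v₁ β₁ v₂ β₂).1 ∧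
      aff v₂ β₂ ≤ (maxAff v₁ β₁ v₂ β₂).1 := by
    intro v₁ β₁ v₂ β₂
    constructor
    · intro x; exact EReal.coe_le_coe_iff.mpr (le_max_left _ _)
    · intro x; exact EReal.coe_le_coe_iff.mpr (le_max_right _ _)
  apply le_antisymm
  · obtain ⟨g, hg⟩ := hT.1 (maxAff (y u₁) (γ u₁ α₁) (y u₂) (γ u₂ α₂))
    have h1 : (affCl u₁ α₁).1 ≤ g.1 := by
      apply (hT.2 _ _).mpr
      rw [hg, hrep]
      exact (key _ _ _ _).1
    have h2 : (affCl u₂ α₂).1 ≤ g.1 := by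
      apply (hT.2 _ _).mpr
      rw [hg, hrep]
      exact (key _ _ _ _).2
    have h3 : (maxAff u₁ α₁ u₂ α₂).1 ≤ g.1 := by
      intro x
      show ((max (u₁ x + α₁) (u₂ x + α₂) : ℝ) : EReal) ≤ g.1 x
      rcases max_cases (u₁ x + α₁) (u₂ x + α₂) with ⟨he, _⟩ | ⟨he, _⟩
      · rw [he]; exact h1 x
      · rw [he]; exact h2 x
    have := (hT.2 _ _).mp h3
    rwa [hg] at this
  · intro x
    have h1 : (T (affCl u₁ α₁)).1 ≤ (T (maxAff u₁ α₁ u₂ α₂)).1 :=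
      (hT.2 _ _).mp (key _ _ _ _).1
    have h2 : (T (affCl u₂ α₂)).1 ≤ (T (maxAff u₁ α₁ u₂ α₂)).1 :=
      (hT.2 _ _).mp (key _ _ _ _).2
    rw [hrep] at h1 h2
    show ((max (y u₁ x + γ u₁ α₁) (y u₂ x + γ u₂ α₂) : ℝ) : EReal) ≤ _
    rcases max_cases (y u₁ x + γ u₁ α₁) (y u₂ x + γ u₂ α₂) with ⟨he, _⟩ | ⟨he, _⟩
    · rw [he]; exact h1 x
    · rw [he]; exact h2 x

end TLemmas

lemma segment_lemma (q₁ q₂ : X →L[ℝ] ℝ) (h : ∀ x, 0 ≤ q₁ x ∨ 0 ≤ q₂ x) :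
    ∃ lam : ℝ, 0 ≤ lam ∧ lam ≤ 1 ∧ ∀ x, lam * q₁ x + (1 - lam) * q₂ x = 0 := by
  by_cases h₁ : q₁ = 0
  · exact ⟨1, zero_le_one, le_refl 1, fun x => by simp [h₁]⟩
  · have hax : ∃ x₁, q₁ x₁ ≠ 0 := by
      by_contra hc
      push_neg at hc
      exact h₁ (ContinuousLinearMap.ext fun x => by simp [hc x])
    obtain ⟨x₁, hx₁⟩ := hax
    set r := q₂ x₁ / q₁ x₁ with hr
    by_cases hdep : ∀ x, q₂ x = r * q₁ x
    · rcases lt_trichotomy r 0 with hneg | hzero | hpos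
      · refine ⟨-r / (1 - r), div_nonneg (by linarith) (by linarith), ?_, ?_⟩
        · rw [div_le_one (by linarith)]; linarith
        · intro x
          rw [hdep x]
          have h1r : (1 : ℝ) - r ≠ 0 := by linarith
          field_simp
          try ring
      · refine ⟨0, le_refl 0, zero_le_one, fun x => by rw [hdep x, hzero]; ring⟩
      · exfalso
        rcases lt_trichotomy (q₁ x₁) 0 with hlt | heq | hgt
        · have h2 : q₂ x₁ = r * q₁ x₁ := hdep x₁
          have : q₂ x₁ < 0 := by nlinarith
          rcases h x₁ with h' | h' <;> linarith
        · exact hx₁ heq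
        · have h2 : q₂ (-x₁) = r * q₁ (-x₁) := hdep (-x₁)
          simp only [map_neg] at h2
          have : q₂ (-x₁) < 0 := by rw [map_neg]; nlinarith
          rcases h (-x₁) with h' | h' <;> simp only [map_neg] at h' <;> nlinarith
    · exfalso
      push_neg at hdep
      obtain ⟨x₂, hx₂⟩ := hdep
      set a := q₁ x₁ with ha
      set b := q₁ x₂ with hb
      set cc := q₂ x₁ with hcc
      set d := q₂ x₂ with hd
      have hrcc : cc = r * a := by rw [hr]; field_simp
      have hdet : a * d - b * cc ≠ 0 := by
        intro hc
        apply hx₂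
        have h2 : a * d = a * (r * b) := by linear_combination hc + b * hrcc
        exact mul_left_cancel₀ hx₁ h2
      set det := a * d - b * cc with hdetdef
      set x := ((b - d) / det) • x₁ + ((cc - a) / det) • x₂ with hx
      have e1 : q₁ x = -1 := by
        rw [hx]
        simp only [map_add, map_smul, smul_eq_mul, ← ha, ← hb]
        field_simp
        ring
      have e2 : q₂ x = -1 := by
        rw [hx]
        simp only [map_add, map_smul, smul_eq_mul, ← hcc, ← hd]
        field_simp
        ring
      rcases h x with h' | h' <;> linarith

section Core
variable {T : Cl X → Cl X} {y : (X →L[ℝ] ℝ) → (X →L[ℝ] ℝ)} {γ : (X →L[ℝ] ℝ) → ℝ → ℝ}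
variable (hT : FullyOrderPreserving T)
variable (hrep : ∀ (u : X →L[ℝ] ℝ) (α : ℝ), (T (affCl u α)).1 = aff (y u) (γ u α))
include hT hrep

set_option maxHeartbeats 1000000 in
lemma core_lemma (u₁ u₂ : X →L[ℝ] ℝ) (hne : u₁ ≠ u₂) (s : ℝ) (hs0 : 0 < s) (hs1 : s < 1) :
    ∃ lam : ℝ, 0 ≤ lam ∧ lam ≤ 1 ∧ ∀ α₁ α₂ : ℝ,
      γ (s • u₁ + (1 - s) • u₂) (s * α₁ + (1 - s) * α₂) =
        lam * γ u₁ α₁ + (1 - lam) * γ u₂ α₂ := by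
  set w := s • u₁ + (1 - s) • u₂ with hw
  have hwx : ∀ x, w x = s * u₁ x + (1 - s) * u₂ x := by
    intro x
    simp [hw, ContinuousLinearMap.add_apply, ContinuousLinearMap.smul_apply, smul_eq_mul]
  obtain ⟨x₀, hx₀⟩ : ∃ x₀, u₁ x₀ ≠ u₂ x₀ := by
    by_contra hc; push_neg at hc; exact hne (ContinuousLinearMap.ext hc)
  have key : ∀ α₁ α₂ β : ℝ, β ≤ s * α₁ + (1 - s) * α₂ ↔
      ∀ x, y w x + γ w β ≤ max (y u₁ x + γ u₁ α₁) (y u₂ x + γ u₂ α₂) := by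
    intro α₁ α₂ β
    have step1 : β ≤ s * α₁ + (1 - s) * α₂ ↔ (affCl w β).1 ≤ (maxAff u₁ α₁ u₂ α₂).1 := by
      constructor
      · intro hβ x
        apply EReal.coe_le_coe_iff.mpr
        have l1 := mul_le_mul_of_nonneg_left
          (le_max_left (u₁ x + α₁) (u₂ x + α₂)) hs0.le
        have l2 := mul_le_mul_of_nonneg_left
          (le_max_right (u₁ x + α₁) (u₂ x + α₂)) (by linarith : (0:ℝ) ≤ 1 - s)
        rw [hwx x]
        linarith
      · intro hle
        set c0 := (α₂ - α₁) / (u₁ x₀ - u₂ x₀) with hc0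
        have hd : u₁ x₀ - u₂ x₀ ≠ 0 := sub_ne_zero.mpr hx₀
        have hval : u₁ (c0 • x₀) - u₂ (c0 • x₀) = α₂ - α₁ := by
          simp only [map_smul, smul_eq_mul, hc0]
          field_simp
        have h2 := EReal.coe_le_coe_iff.mp (hle (c0 • x₀))
        have hmax : max (u₁ (c0 • x₀) + α₁) (u₂ (c0 • x₀) + α₂) = u₁ (c0 • x₀) + α₁ :=
          max_eq_left (by linarith)
        rw [hmax, hwx] at h2
        have h3 : s * (u₁ (c0 • x₀) - u₂ (c0 • x₀)) = s * (α₂ - α₁) := by rw [hval]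
        linarith
    have step2 : ((affCl w β).1 ≤ (maxAff u₁ α₁ u₂ α₂).1) ↔
        ∀ x, y w x + γ w β ≤ max (y u₁ x + γ u₁ α₁) (y u₂ x + γ u₂ α₂) := by
      rw [hT.2, T_max hT hrep, hrep]
      constructor
      · intro hle x; exact EReal.coe_le_coe_iff.mp (hle x)
      · intro hle x; exact EReal.coe_le_coe_iff.mpr (hle x)
    exact step1.trans step2
  have hseg : ∃ lam : ℝ, 0 ≤ lam ∧ lam ≤ 1 ∧
      ∀ x, lam * (y u₁ - y w) x + (1 - lam) * (y u₂ - y w) x = 0 := by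
    apply segment_lemma
    intro x
    by_contra hc
    push_neg at hc
    obtain ⟨hq1, hq2⟩ := hc
    rw [ContinuousLinearMap.sub_apply] at hq1 hq2
    set q1 := y u₁ x - y w x with hq1d
    set q2 := y u₂ x - y w x with hq2d
    have h0 := (key 0 0 0).mp (by norm_num)
    set g1 := γ u₁ 0 with hg1
    set g2 := γ u₂ 0 with hg2
    set gw := γ w 0 with hgw
    set t := max ((g1 - gw + 1) / (-q1)) ((g2 - gw + 1) / (-q2)) with ht
    have ht1 : t * q1 ≤ gw - g1 - 1 := by
      have := le_max_left ((g1 - gw + 1) / (-q1)) ((g2 - gw + 1) / (-q2))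
      have h4 := (div_le_iff₀ (by linarith : (0:ℝ) < -q1)).mp (this.trans (le_refl t))
      nlinarith
    have ht2 : t * q2 ≤ gw - g2 - 1 := by
      have := le_max_right ((g1 - gw + 1) / (-q1)) ((g2 - gw + 1) / (-q2))
      have h4 := (div_le_iff₀ (by linarith : (0:ℝ) < -q2)).mp (this.trans (le_refl t))
      nlinarith
    have h5 := h0 (t • x)
    simp only [map_smul, smul_eq_mul] at h5
    have e1 : t * q1 = t * (y u₁ x) - t * (y w x) := by rw [hq1d]; ring
    have e2 : t * q2 = t * (y u₂ x) - t * (y w x) := by rw [hq2d]; ring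
    rcases max_cases (t * (y u₁ x) + g1) (t * (y u₂ x) + g2) with ⟨he, _⟩ | ⟨he, _⟩ <;>
      rw [he] at h5 <;> linarith
  obtain ⟨lam, hl0, hl1, hlam⟩ := hseg
  have hyw : ∀ x, y w x = lam * y u₁ x + (1 - lam) * y u₂ x := by
    intro x
    have h6 := hlam x
    rw [ContinuousLinearMap.sub_apply, ContinuousLinearMap.sub_apply] at h6
    linarith [h6]
  have hyne : y u₁ ≠ y u₂ := fun hc => hne (y_inj hT hrep hc)
  obtain ⟨z₀, hz₀⟩ : ∃ z₀, y u₁ z₀ ≠ y u₂ z₀ := by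
    by_contra hc; push_neg at hc; exact hyne (ContinuousLinearMap.ext hc)
  refine ⟨lam, hl0, hl1, ?_⟩
  intro α₁ α₂
  apply le_antisymm
  · have h1 := (key α₁ α₂ (s * α₁ + (1 - s) * α₂)).mp (le_refl _)
    set c1 := (γ u₂ α₂ - γ u₁ α₁) / (y u₁ z₀ - y u₂ z₀) with hc1
    have hdz : y u₁ z₀ - y u₂ z₀ ≠ 0 := sub_ne_zero.mpr hz₀
    have hvz : y u₁ (c1 • z₀) - y u₂ (c1 • z₀) = γ u₂ α₂ - γ u₁ α₁ := by
      simp only [map_smul, smul_eq_mul, hc1]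
      field_simp
    have h2 := h1 (c1 • z₀)
    have hmax : max (y u₁ (c1 • z₀) + γ u₁ α₁) (y u₂ (c1 • z₀) + γ u₂ α₂)
        = y u₁ (c1 • z₀) + γ u₁ α₁ := max_eq_left (by linarith)
    rw [hmax, hyw] at h2
    have h3 : (1 - lam) * (y u₁ (c1 • z₀) - y u₂ (c1 • z₀))
        = (1 - lam) * (γ u₂ α₂ - γ u₁ α₁) := by rw [hvz]
    linarith
  · obtain ⟨β', hβ'⟩ := gamma_surj hT hrep w (lam * γ u₁ α₁ + (1 - lam) * γ u₂ α₂)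
    have hcond : ∀ x, y w x + γ w β' ≤ max (y u₁ x + γ u₁ α₁) (y u₂ x + γ u₂ α₂) := by
      intro x
      rw [hβ', hyw]
      have l1 := mul_le_mul_of_nonneg_left
        (le_max_left (y u₁ x + γ u₁ α₁) (y u₂ x + γ u₂ α₂)) hl0
      have l2 := mul_le_mul_of_nonneg_left
        (le_max_right (y u₁ x + γ u₁ α₁) (y u₂ x + γ u₂ α₂)) (by linarith : (0:ℝ) ≤ 1 - lam)
      linarith
    have hβle : β' ≤ s * α₁ + (1 - s) * α₂ := (key α₁ α₂ β').mpr hcond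
    have h7 := (gamma_le_iff hT hrep w β' (s * α₁ + (1 - s) * α₂)).mpr hβle
    rw [hβ'] at h7
    exact h7

end Core

omit [NormedAddCommGroup X] [NormedSpace ℝ X] in
lemma additive_monotone_linear (H : ℝ → ℝ) (hadd : ∀ a b, H (a + b) = H a + H b)
    (hmono : Monotone H) : ∀ x, H x = H 1 * x := by
  have H0 : H 0 = 0 := by have := hadd 0 0; norm_num at this; linarith
  set f : ℝ →+ ℝ := AddMonoidHom.mk' H hadd with hf
  have hrat : ∀ (q : ℚ) (x : ℝ), H ((q : ℝ) * x) = (q : ℝ) * H x := by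
    intro q x
    have := map_ratCast_smul f ℝ ℝ q x
    simpa [smul_eq_mul, hf] using this
  have hq : ∀ q : ℚ, H (q : ℝ) = H 1 * (q : ℝ) := by
    intro q
    have := hrat q 1
    rw [mul_one] at this
    rw [this, mul_comm]
  have hH1 : 0 ≤ H 1 := by have := hmono (zero_le_one (α := ℝ)); linarith
  intro x
  by_contra hne
  rcases lt_or_gt_of_ne hne with hlt | hgt
  · set δ := (H 1 * x - H x) / (H 1 + 1) with hδ
    have hδpos : 0 < δ := by apply div_pos <;> linarith
    obtain ⟨q, hq1, hq2⟩ := exists_rat_btwn (show x - δ < x by linarith)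
    have h1 : H (q : ℝ) ≤ H x := hmono hq2.le
    rw [hq q] at h1
    have h2 : H 1 * (x - δ) ≤ H 1 * (q : ℝ) := mul_le_mul_of_nonneg_left hq1.le hH1
    have h3 : (H 1 + 1) * δ = H 1 * x - H x := by
      rw [hδ]; field_simp
    nlinarith
  · set δ := (H x - H 1 * x) / (H 1 + 1) with hδ
    have hδpos : 0 < δ := by apply div_pos <;> linarith
    obtain ⟨q, hq1, hq2⟩ := exists_rat_btwn (show x < x + δ by linarith)
    have h1 : H x ≤ H (q : ℝ) := hmono hq1.le
    rw [hq q] at h1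
    have h2 : H 1 * (q : ℝ) ≤ H 1 * (x + δ) := mul_le_mul_of_nonneg_left hq2.le hH1
    have h3 : (H 1 + 1) * δ = H x - H 1 * x := by
      rw [hδ]; field_simp
    nlinarith

section Affine
variable {T : Cl X → Cl X} {y : (X →L[ℝ] ℝ) → (X →L[ℝ] ℝ)} {γ : (X →L[ℝ] ℝ) → ℝ → ℝ}
variable (hT : FullyOrderPreserving T)
variable (hrep : ∀ (u : X →L[ℝ] ℝ) (α : ℝ), (T (affCl u α)).1 = aff (y u) (γ u α))
include hT hrep

lemma gamma_affine_pair (u₁ u₂ : X →L[ℝ] ℝ) (hne : u₁ ≠ u₂) :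
    ∃ κ : ℝ, 0 < κ ∧ ∀ α, γ u₁ α = κ * α + γ u₁ 0 := by
  obtain ⟨lam, hl0, hl1, hI⟩ :=
    core_lemma hT hrep u₁ u₂ hne (1/2) (by norm_num) (by norm_num)
  set w := (1/2 : ℝ) • u₁ + (1 - 1/2 : ℝ) • u₂ with hwdef
  set G : ℝ → ℝ := fun σ => γ w ((1/2) * σ) with hGdef
  have hG : ∀ a b : ℝ, G (a + b) = lam * γ u₁ a + (1 - lam) * γ u₂ b := by
    intro a b
    have harg : (1/2 : ℝ) * (a + b) = (1/2) * a + (1 - 1/2) * b := by ring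
    show γ w ((1/2) * (a + b)) = _
    rw [harg]
    exact hI a b
  have hGadd : ∀ a b, G (a + b) = G a + G b - G 0 := by
    intro a b
    have h1 := hG a b
    have h2 : G a = lam * γ u₁ a + (1 - lam) * γ u₂ 0 := by
      have := hG a 0; rwa [add_zero] at this
    have h3 : G b = lam * γ u₁ 0 + (1 - lam) * γ u₂ b := by
      have := hG 0 b; rwa [zero_add] at this
    have h4 : G 0 = lam * γ u₁ 0 + (1 - lam) * γ u₂ 0 := by
      have := hG 0 0; rwa [add_zero] at this
    linarith
  have hGmono : Monotone G := by
    intro a b hab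
    exact (gamma_le_iff hT hrep w _ _).mpr (by linarith)
  have hGstrict : G 0 < G 1 := by
    apply lt_of_not_ge
    intro hle
    have := (gamma_le_iff hT hrep w ((1/2) * 1) ((1/2) * 0)).mp hle
    linarith
  have hlam_pos : 0 < lam := by
    rcases hl0.lt_or_eq with h | h
    · exact h
    · exfalso
      have h2 : G 1 = lam * γ u₁ 1 + (1 - lam) * γ u₂ 0 := by
        have := hG 1 0; rwa [add_zero] at this
      have h4 : G 0 = lam * γ u₁ 0 + (1 - lam) * γ u₂ 0 := by
        have := hG 0 0; rwa [add_zero] at this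
      rw [← h] at h2 h4
      simp only [zero_mul, zero_add, zero_sub, neg_zero, sub_zero] at h2 h4
      rw [← h2] at h4
      linarith [h4, hGstrict]
  set H : ℝ → ℝ := fun σ => G σ - G 0 with hH
  have hHadd : ∀ a b, H (a + b) = H a + H b := by
    intro a b
    show G (a + b) - G 0 = (G a - G 0) + (G b - G 0)
    have := hGadd a b
    linarith
  have hHmono : Monotone H := fun a b hab => by
    show G a - G 0 ≤ G b - G 0
    linarith [hGmono hab]
  have hlin := additive_monotone_linear H hHadd hHmono
  have hH1pos : 0 < H 1 := by show 0 < G 1 - G 0; linarith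
  refine ⟨H 1 / lam, div_pos hH1pos hlam_pos, ?_⟩
  intro α
  have e1 : G α = lam * γ u₁ α + (1 - lam) * γ u₂ 0 := by
    have := hG α 0; rwa [add_zero] at this
  have e2 : G 0 = lam * γ u₁ 0 + (1 - lam) * γ u₂ 0 := by
    have := hG 0 0; rwa [add_zero] at this
  have e3 : G α - G 0 = H 1 * α := hlin α
  have e4 : lam * (γ u₁ α - γ u₁ 0) = H 1 * α := by linarith
  have e5 : γ u₁ α - γ u₁ 0 = H 1 / lam * α := by
    rw [div_mul_eq_mul_div, eq_div_iff hlam_pos.ne']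
    linarith
  linarith

set_option maxHeartbeats 1600000 in
lemma kappa_const (p : X →L[ℝ] ℝ) (hp : p ≠ 0) :
    ∃ κ : ℝ, 0 < κ ∧ ∀ u α, γ u α = κ * α + γ u 0 := by
  have hex : ∀ u : X →L[ℝ] ℝ, ∃ κ : ℝ, 0 < κ ∧ ∀ α, γ u α = κ * α + γ u 0 := by
    intro u
    apply gamma_affine_pair hT hrep u (u + p)
    intro h
    exact hp (left_eq_add.mp h)
  choose K hK hKf using hex
  have k1 : ∀ (u : X →L[ℝ] ℝ) (a b : ℝ), γ u a - γ u b = K u * (a - b) := by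
    intro u a b
    rw [hKf u a, hKf u b]; ring
  have hmid : ∀ u₁ u₂ : X →L[ℝ] ℝ,
      (K ((1/2 : ℝ) • u₁ + (1 - 1/2 : ℝ) • u₂))⁻¹ * 2 = (K u₁)⁻¹ + (K u₂)⁻¹ := by
    intro u₁ u₂
    by_cases hne : u₁ = u₂
    · subst hne
      have hcomb : (1/2 : ℝ) • u₁ + (1 - 1/2 : ℝ) • u₁ = u₁ := by
        rw [← add_smul]; norm_num
      rw [hcomb]; ring
    · obtain ⟨lam, hl0, hl1, hI⟩ :=
        core_lemma hT hrep u₁ u₂ hne (1/2) (by norm_num) (by norm_num)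
      set w := (1/2 : ℝ) • u₁ + (1 - 1/2 : ℝ) • u₂ with hwdef
      have d1 : γ w ((1/2) * 1 + (1 - 1/2) * 0) - γ w ((1/2) * 0 + (1 - 1/2) * 0)
          = lam * (γ u₁ 1 - γ u₁ 0) := by
        have a1 := hI 1 0
        have a2 := hI 0 0
        linarith
      have d2 : γ w ((1/2) * 0 + (1 - 1/2) * 1) - γ w ((1/2) * 0 + (1 - 1/2) * 0)
          = (1 - lam) * (γ u₂ 1 - γ u₂ 0) := by
        have a1 := hI 0 1
        have a2 := hI 0 0
        linarith
      rw [k1, k1] at d1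
      rw [k1, k1] at d2
      have hKw : K w = 2 * lam * K u₁ := by nlinarith [d1]
      have hKw2 : K w = 2 * (1 - lam) * K u₂ := by nlinarith [d2]
      have h1 : (0:ℝ) < K w := hK w
      have h2 : (0:ℝ) < K u₁ := hK u₁
      have h3 : (0:ℝ) < K u₂ := hK u₂
      have hlp : 0 < lam := by nlinarith
      have hlp2 : lam < 1 := by nlinarith
      field_simp
      linear_combination (-(K u₂)) * hKw + (-(K u₁)) * hKw2
  set ρ : (X →L[ℝ] ℝ) → ℝ := fun u => (K u)⁻¹ with hρ
  have hρpos : ∀ u, 0 < ρ u := fun u => inv_pos.mpr (hK u)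
  have hadd : ∀ a b : X →L[ℝ] ℝ, ρ (a + b) = ρ a + ρ b - ρ 0 := by
    intro a b
    have h1 := hmid a b
    have h2 := hmid (a + b) 0
    have hmeq : (1/2 : ℝ) • (a + b) + (1 - 1/2 : ℝ) • (0 : X →L[ℝ] ℝ)
        = (1/2 : ℝ) • a + (1 - 1/2 : ℝ) • b := by
      rw [smul_zero, add_zero, smul_add]
      norm_num
    rw [hmeq] at h2
    show (K (a+b))⁻¹ = (K a)⁻¹ + (K b)⁻¹ - (K 0)⁻¹
    have e1 : (K ((1/2 : ℝ) • a + (1 - 1/2 : ℝ) • b))⁻¹ * 2 = (K a)⁻¹ + (K b)⁻¹ := h1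
    have e2 : (K ((1/2 : ℝ) • a + (1 - 1/2 : ℝ) • b))⁻¹ * 2 = (K (a+b))⁻¹ + (K 0)⁻¹ := h2
    linarith
  have hzero : ∀ v, ρ v = ρ 0 := by
    have hneg : ∀ v : X →L[ℝ] ℝ, ρ (-v) = 2 * ρ 0 - ρ v := by
      intro v
      have := hadd v (-v)
      simp only [add_neg_cancel] at this
      linarith
    have hA : ∀ (m : ℕ) (u : X →L[ℝ] ℝ), ρ (m • u) = m * (ρ u - ρ 0) + ρ 0 := by
      intro m
      induction m with
      | zero => intro u; simp
      | succ k ih =>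
        intro u
        rw [succ_nsmul, hadd, ih]
        push_cast
        ring
    have hle : ∀ v, ρ v - ρ 0 ≤ 0 := by
      intro v
      by_contra hc
      push_neg at hc
      obtain ⟨n, hn⟩ := exists_nat_gt (ρ 0 / (ρ v - ρ 0))
      have hn2 : ρ 0 < n * (ρ v - ρ 0) := by
        rw [div_lt_iff₀ hc] at hn
        linarith
      have hpos := hρpos (n • (-v))
      rw [hA n (-v), hneg v] at hpos
      nlinarith
    intro v
    have h1 := hle v
    have h2 := hle (-v)
    rw [hneg v] at h2
    linarith
  refine ⟨K 0, hK 0, fun u α => ?_⟩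
  have hKeq : K u = K 0 := by
    have h := hzero u
    show _
    have : (K u)⁻¹ = (K 0)⁻¹ := h
    exact inv_injective this
  rw [hKf u α, hKeq]

end Affine

end Lemmas

theorem constant_part_affine
    [NormedAddCommGroup X] [NormedSpace ℝ X] [CompleteSpace X]
    (hdim : 2 ≤ Module.rank ℝ X)
    (T : Cl X → Cl X) (hT : FullyOrderPreserving T)
    (y : (X →L[ℝ] ℝ) → (X →L[ℝ] ℝ)) (γ : (X →L[ℝ] ℝ) → ℝ → ℝ)
    (hrep : ∀ (u : X →L[ℝ] ℝ) (α : ℝ), (T (affCl u α)).1 = aff (y u) (γ u α)) :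
    ∀ (u₁ u₂ : X →L[ℝ] ℝ) (α₁ α₂ : ℝ) (s : ℝ), 0 ≤ s → s ≤ 1 →
      γ (s • u₁ + (1 - s) • u₂) (s * α₁ + (1 - s) * α₂) =
        s * γ u₁ α₁ + (1 - s) * γ u₂ α₂ := by
  have hnt : Nontrivial X :=
    rank_pos_iff_nontrivial.mp (lt_of_lt_of_le (by norm_num) hdim)
  obtain ⟨x₀, hx₀⟩ := exists_ne (0 : X)
  obtain ⟨p, hp1, hp2⟩ := exists_dual_vector ℝ x₀ (norm_ne_zero_iff.mpr hx₀)
  have hp : p ≠ 0 := by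
    intro h
    rw [h] at hp2
    simp only [ContinuousLinearMap.zero_apply] at hp2
    exact hx₀ (norm_eq_zero.mp hp2.symm)
  obtain ⟨κ, hκ, hKf⟩ := kappa_const hT hrep p hp
  have k1 : ∀ (u : X →L[ℝ] ℝ) (a b : ℝ), γ u a - γ u b = κ * (a - b) := by
    intro u a b
    rw [hKf u a, hKf u b]; ring
  intro u₁ u₂ α₁ α₂ s hs0 hs1
  rcases eq_or_lt_of_le hs0 with h0 | h0
  · rw [← h0]
    norm_num
  rcases eq_or_lt_of_le hs1 with h1 | h1
  · rw [h1]
    norm_num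
  by_cases hne : u₁ = u₂
  · subst hne
    have hcomb : s • u₁ + (1 - s) • u₁ = u₁ := by
      rw [← add_smul]; norm_num
    rw [hcomb, hKf u₁ (s * α₁ + (1 - s) * α₂), hKf u₁ α₁, hKf u₁ α₂]
    ring
  · obtain ⟨lam, hl0, hl1, hI⟩ := core_lemma hT hrep u₁ u₂ hne s h0 h1
    have d : γ (s • u₁ + (1 - s) • u₂) (s * 1 + (1 - s) * 0)
        - γ (s • u₁ + (1 - s) • u₂) (s * 0 + (1 - s) * 0)
        = lam * (γ u₁ 1 - γ u₁ 0) := by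
      have a1 := hI 1 0
      have a2 := hI 0 0
      linarith
    rw [k1, k1] at d
    have d2 : κ * s = κ * lam := by ring_nf at d ⊢; linarith
    have hls : s = lam := mul_left_cancel₀ (ne_of_gt hκ) d2
    rw [hI α₁ α₂, hls]
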